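/- There exists a class of languages over a finite alphabet that is not identifiable in the limit from positive presentations: specifically, for any infinite strictly increasing chain of finite languages L_1 ⊂ L_2 ⊂ ⋯ together with their union L_∞, no learning function A (mapping finite sequences of strings to language hypotheses from this class) identifies every language of the class {L_1, L_2, …, L_∞} in the limit from positive presentations. -/

import Mathlib

/-- The finite sequence of the first `t` elements of a positive presentation `f`. -/
def prefixSeq {α : Type*} (f : ℕ → List α) (t : ℕ) : List (List α) :=
  (List.range t).map f

/-- `f` is a positive presentation of the language `L`: an infinite sequence of strings
whose set of elements is exactly `L`. -/
def Presents {α : Type*} (f : ℕ → List α) (L : Set (List α)) : Prop :=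
  Set.range f = L

/-- The learner `A` identifies `L` in the limit from the positive presentation `f`:
there is a time `t` such that for all `u ≥ t` the hypothesis is unchanged,
and this hypothesis equals `L`. -/
def IdentifiesOn {α : Type*} (A : List (List α) → Set (List α))
    (f : ℕ → List α) (L : Set (List α)) : Prop :=
  ∃ t : ℕ, (∀ u : ℕ, t ≤ u → A (prefixSeq f u) = A (prefixSeq f t)) ∧
    A (prefixSeq f t) = L

/-! ### Auxiliary machinery: turning a chain of finite prefixes into a presentation -/

/-- The infinite sequence determined by a prefix-chain `S` of finite sequences. -/
noncomputable def chainF {α : Type*} (S : ℕ → List (List α)) : ℕ → List α :=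
  fun n => (S (n + 1)).getD n []

lemma prefixSeq_take {α : Type*} (f : ℕ → List α) {k m : ℕ} (h : k ≤ m) :
    prefixSeq f k = (prefixSeq f m).take k := by
  simp [prefixSeq, ← List.map_take, List.take_range, Nat.min_eq_left h]

lemma length_prefixSeq {α : Type*} (f : ℕ → List α) (t : ℕ) :
    (prefixSeq f t).length = t := by simp [prefixSeq]

section Chain

variable {α : Type*} {S : ℕ → List (List α)}
  (hpre : ∀ n, S n <+: S (n + 1)) (hlen : ∀ n, n ≤ (S n).length)

lemma chain_mono (hpre : ∀ n, S n <+: S (n + 1)) :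
    ∀ {m n : ℕ}, m ≤ n → S m <+: S n := by
  intro m n h
  induction n with
  | zero => simp [Nat.le_zero.mp h]
  | succ k ih =>
    rcases Nat.lt_or_ge m (k + 1) with h' | h'
    · exact (ih (Nat.lt_succ_iff.mp h')).trans (hpre k)
    · have : m = k + 1 := le_antisymm h h'
      simp [this]

include hpre hlen in
lemma chainF_eq_getElem {n j : ℕ} (hj : j < (S n).length) :
    chainF S j = (S n)[j] := by
  have hj' : j < (S (j + 1)).length := lt_of_lt_of_le (Nat.lt_succ_self j) (hlen (j + 1))
  set M := max n (j + 1) with hM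
  have h1 : S n <+: S M := chain_mono hpre (le_max_left _ _)
  have h2 : S (j + 1) <+: S M := chain_mono hpre (le_max_right _ _)
  calc chainF S j = (S (j + 1))[j] := List.getD_eq_getElem _ _ hj'
    _ = (S M)[j]'(lt_of_lt_of_le hj' h2.length_le) := h2.getElem hj'
    _ = (S n)[j] := (h1.getElem hj).symm

include hpre hlen in
lemma prefixSeq_chainF (n : ℕ) : prefixSeq (chainF S) (S n).length = S n := by
  apply List.ext_getElem
  · simp [length_prefixSeq]
  · intro j h1 h2
    have hf : (prefixSeq (chainF S) (S n).length)[j] = chainF S j := by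
      simp [prefixSeq]
    rw [hf, chainF_eq_getElem hpre hlen h2]

include hpre hlen in
lemma prefixSeq_chainF_of_prefix {P : List (List α)} {m : ℕ} (h : P <+: S m) :
    prefixSeq (chainF S) P.length = P := by
  rw [prefixSeq_take (chainF S) h.length_le, prefixSeq_chainF hpre hlen,
    ← List.prefix_iff_eq_take.mp h]

include hpre hlen in
lemma range_chainF : Set.range (chainF S) = {x | ∃ n, x ∈ S n} := by
  ext x
  constructor
  · rintro ⟨k, rfl⟩
    have hk : k < (S (k + 1)).length := lt_of_lt_of_le (Nat.lt_succ_self k) (hlen (k + 1))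
    exact ⟨k + 1, by rw [chainF, List.getD_eq_getElem _ _ hk]; exact List.getElem_mem hk⟩
  · rintro ⟨n, hx⟩
    obtain ⟨j, hj, hjx⟩ := List.mem_iff_getElem.mp hx
    exact ⟨j, by rw [chainF_eq_getElem hpre hlen hj, hjx]⟩

end Chain

/-! ### The locking-sequence lemma -/

lemma locking {α : Type*} (A : List (List α) → Set (List α)) (L : Set (List α))
    (hLfin : L.Finite) (hLne : L.Nonempty)
    (hid : ∀ f, Presents f L → IdentifiesOn A f L)
    (ρ : List (List α)) (hρ : ∀ x ∈ ρ, x ∈ L) :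
    ∃ σ, (∀ x ∈ σ, x ∈ L) ∧ ∀ τ, (∀ x ∈ τ, x ∈ L) → A (ρ ++ σ ++ τ) = L := by
  by_contra hcon
  push_neg at hcon
  -- hcon : ∀ σ, (∀ x ∈ σ, x ∈ L) → ∃ τ, (∀ x ∈ τ, x ∈ L) ∧ A (ρ ++ σ ++ τ) ≠ L
  have hcon' : ∀ σ : List (List α), ∃ τ, (∀ x ∈ τ, x ∈ L) ∧
      ((∀ x ∈ σ, x ∈ L) → A (ρ ++ σ ++ τ) ≠ L) := by
    intro σ
    by_cases h : ∀ x ∈ σ, x ∈ L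
    · obtain ⟨τ, hτ1, hτ2⟩ := hcon σ h
      exact ⟨τ, hτ1, fun _ => hτ2⟩
    · exact ⟨[], by simp, fun h' => absurd h' h⟩
  choose τF hτ1 hτ2 using hcon'
  set e : List (List α) := hLfin.toFinset.toList with he_def
  have he : ∀ x, x ∈ e ↔ x ∈ L := by
    intro x; simp [he_def, hLfin.mem_toFinset]
  have helen : 0 < e.length := by
    obtain ⟨x, hx⟩ := hLne
    exact List.length_pos_iff.mpr (fun h0 => by simp [h0] at he; exact (he x).elim hx)
  -- the chain of σ-parts
  set σc : ℕ → List (List α) := fun n => (fun l => l ++ τF l ++ e)^[n] e with hσc_def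
  have hσc_succ : ∀ n, σc (n + 1) = σc n ++ τF (σc n) ++ e := by
    intro n
    simp only [hσc_def, Function.iterate_succ_apply']
  have hσcL : ∀ n, ∀ x ∈ σc n, x ∈ L := by
    intro n
    induction n with
    | zero => intro x hx; exact (he x).mp hx
    | succ k ih =>
      intro x hx
      rw [hσc_succ k] at hx
      rcases List.mem_append.mp hx with hx | hx
      · rcases List.mem_append.mp hx with hx | hx
        · exact ih x hx
        · exact hτ1 (σc k) x hx
      · exact (he x).mp hx
  set S : ℕ → List (List α) := fun n => ρ ++ σc n with hS_def
  have hpre : ∀ n, S n <+: S (n + 1) := by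
    intro n
    simp only [hS_def, hσc_succ n]
    refine ⟨τF (σc n) ++ e, by simp [List.append_assoc]⟩
  have hlen : ∀ n, n ≤ (S n).length := by
    intro n
    induction n with
    | zero => simp
    | succ k ih =>
      have : (S k).length + 1 ≤ (S (k + 1)).length := by
        simp only [hS_def, hσc_succ k, List.length_append]
        omega
      omega
  have hSL : ∀ n, ∀ x ∈ S n, x ∈ L := by
    intro n x hx
    rcases List.mem_append.mp hx with hx | hx
    · exact hρ x hx
    · exact hσcL n x hx
  have hpres : Presents (chainF S) L := by
    rw [Presents, range_chainF hpre hlen]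
    ext x
    constructor
    · rintro ⟨n, hx⟩; exact hSL n x hx
    · intro hx
      exact ⟨0, by simp only [hS_def, hσc_def, Function.iterate_zero_apply]
                   exact List.mem_append.mpr (Or.inr ((he x).mpr hx))⟩
  obtain ⟨t, hconst, hval⟩ := hid (chainF S) hpres
  -- the bad prefix at stage t
  set P : List (List α) := S t ++ τF (σc t) with hP_def
  have hPpre : P <+: S (t + 1) := by
    simp only [hP_def, hS_def, hσc_succ t]
    exact ⟨e, by simp [List.append_assoc]⟩
  have hPlen : t ≤ P.length := by
    have := hlen t
    simp only [hP_def, List.length_append]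
    omega
  have h1 : A (prefixSeq (chainF S) P.length) = L := by
    rw [hconst P.length hPlen, hval]
  rw [prefixSeq_chainF_of_prefix hpre hlen hPpre] at h1
  have hPeq : P = ρ ++ σc t ++ τF (σc t) := by
    simp only [hP_def, hS_def]
  rw [hPeq] at h1
  exact hτ2 (σc t) (hσcL t) h1

/-- **Gold.** For any infinite strictly increasing chain of finite languages
`L 0 ⊂ L 1 ⊂ ⋯` over a finite alphabet, together with their union, no learning
function `A` identifies every language of the class `{L i} ∪ {⋃ i, L i}` in the
limit from positive presentations. -/
theorem gold_unlearnable {α : Type*} [Finite α]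
    (L : ℕ → Set (List α))
    (hfin : ∀ i, (L i).Finite)
    (hchain : ∀ i, L i ⊂ L (i + 1))
    (A : List (List α) → Set (List α)) :
    ¬ (∀ M ∈ Set.range L ∪ {⋃ i, L i},
        ∀ f : ℕ → List α, Presents f M → IdentifiesOn A f M) := by
  intro H
  have hmono : ∀ {i j : ℕ}, i ≤ j → L i ⊆ L j := by
    intro i j h
    induction j with
    | zero => simp [Nat.le_zero.mp h]
    | succ k ih =>
      rcases Nat.lt_or_ge i (k + 1) with h' | h'
      · exact (ih (Nat.lt_succ_iff.mp h')).trans (hchain k).subset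
      · have : i = k + 1 := le_antisymm h h'
        simp [this]
  have hne : ∀ i, (L (i + 1)).Nonempty := by
    intro i
    obtain ⟨x, hx, -⟩ := Set.exists_of_ssubset (hchain i)
    exact ⟨x, hx⟩
  have hid_i : ∀ i, ∀ f, Presents f (L i) → IdentifiesOn A f (L i) :=
    fun i => H (L i) (Or.inl ⟨i, rfl⟩)
  have hid_U : ∀ f, Presents f (⋃ i, L i) → IdentifiesOn A f (⋃ i, L i) :=
    H (⋃ i, L i) (Or.inr rfl)
  -- enumerations
  set e : ℕ → List (List α) := fun n => (hfin n).toFinset.toList with he_def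
  have he : ∀ n x, x ∈ e n ↔ x ∈ L n := by
    intro n x; simp [he_def, (hfin n).mem_toFinset]
  have helen : ∀ n, 0 < (e (n + 1)).length := by
    intro n
    obtain ⟨x, hx⟩ := hne n
    exact List.length_pos_iff.mpr (List.ne_nil_of_mem ((he (n + 1) x).mpr hx))
  -- locking sequences (made total)
  have lock' : ∀ (k : ℕ) (ρ : List (List α)), ∃ σ, (∀ x ∈ σ, x ∈ L (k + 1)) ∧
      ((∀ x ∈ ρ, x ∈ L (k + 1)) →
        ∀ τ, (∀ x ∈ τ, x ∈ L (k + 1)) → A (ρ ++ σ ++ τ) = L (k + 1)) := by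
    intro k ρ
    by_cases h : ∀ x ∈ ρ, x ∈ L (k + 1)
    · obtain ⟨σ, hσ1, hσ2⟩ := locking A (L (k + 1)) (hfin (k + 1)) (hne k)
        (hid_i (k + 1)) ρ h
      exact ⟨σ, hσ1, fun _ => hσ2⟩
    · exact ⟨[], by simp, fun h' => absurd h' h⟩
  choose σF hσ1 hσ2 using lock'
  -- the diagonal chain of prefixes
  set T : ℕ → List (List α) :=
    fun n => Nat.rec [] (fun k p => p ++ σF k p ++ e (k + 1)) n with hT_def
  have hT_succ : ∀ n, T (n + 1) = T n ++ σF n (T n) ++ e (n + 1) := fun n => rfl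
  have hTL : ∀ n, ∀ x ∈ T n, x ∈ L n := by
    intro n
    induction n with
    | zero =>
      intro x hx
      rw [show T 0 = [] from rfl] at hx
      exact absurd hx (List.not_mem_nil (a := x))
    | succ k ih =>
      intro x hx
      rw [hT_succ k] at hx
      rcases List.mem_append.mp hx with hx | hx
      · rcases List.mem_append.mp hx with hx | hx
        · exact (hchain k).subset (ih x hx)
        · exact hσ1 k (T k) x hx
      · exact (he (k + 1) x).mp hx
  have hpre : ∀ n, T n <+: T (n + 1) := by
    intro n
    rw [hT_succ n]
    exact ⟨σF n (T n) ++ e (n + 1), by simp [List.append_assoc]⟩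
  have hlen : ∀ n, n ≤ (T n).length := by
    intro n
    induction n with
    | zero => simp
    | succ k ih =>
      have h1 := helen k
      have : (T k).length + 1 ≤ (T (k + 1)).length := by
        rw [hT_succ k]
        simp only [List.length_append]
        omega
      omega
  -- chainF T presents the union
  have hpres : Presents (chainF T) (⋃ i, L i) := by
    rw [Presents, range_chainF hpre hlen]
    ext x
    constructor
    · rintro ⟨n, hx⟩
      exact Set.mem_iUnion.mpr ⟨n, hTL n x hx⟩
    · intro hx
      obtain ⟨i, hx⟩ := Set.mem_iUnion.mp hx
      refine ⟨i + 1, ?_⟩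
      rw [hT_succ i]
      exact List.mem_append.mpr (Or.inr ((he (i + 1) x).mpr ((hchain i).subset hx)))
  obtain ⟨t, hconst, hval⟩ := hid_U (chainF T) hpres
  -- A's value on the prefix T (t+1) is L (t+1)
  have hAT : A (T (t + 1)) = L (t + 1) := by
    rw [hT_succ t]
    exact hσ2 t (T t) (fun x hx => (hchain t).subset (hTL t x hx))
      (e (t + 1)) (fun x hx => (he (t + 1) x).mp hx)
  have hTlen : t ≤ (T (t + 1)).length := le_trans (Nat.le_succ t) (hlen (t + 1))
  have h1 : A (prefixSeq (chainF T) (T (t + 1)).length) = ⋃ i, L i := by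
    rw [hconst (T (t + 1)).length hTlen, hval]
  rw [prefixSeq_chainF (hpre) (hlen) (t + 1)] at h1
  rw [hAT] at h1
  -- but L (t+1) is a proper subset of the union
  have hsub : L (t + 2) ⊆ L (t + 1) := by
    rw [h1]
    exact Set.subset_iUnion L (t + 2)
  exact (hchain (t + 1)).not_subset hsub
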